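/- arXiv:2004.09565 — 2 statements merged into one kernel-verified Lean document; each statement's English description precedes it below -/
import Mathlib

section
/- Under the standing assumptions, the regularizer R_c(u) = Σ_λ w_λ |(E(u))_λ|^q + (c/2)‖u − D(E(u))‖² is weakly sequentially lower semicontinuous on X. -/
open scoped ENNReal
open RealInnerProductSpace Filter Topology

/-- Weak sequential convergence in a real Hilbert space. -/
def WeakConv {X : Type*} [NormedAddCommGroup X] [InnerProductSpace ℝ X]
    (u : ℕ → X) (l : X) : Prop :=
  ∀ v : X, Tendsto (fun k => ⟪v, u k⟫) atTop (nhds ⟪v, l⟫)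

/-- Weak sequential continuity of a map between real Hilbert spaces. -/
def WeakSeqCont {X Y : Type*} [NormedAddCommGroup X] [InnerProductSpace ℝ X]
    [NormedAddCommGroup Y] [InnerProductSpace ℝ Y] (F : X → Y) : Prop :=
  ∀ (u : ℕ → X) (l : X), WeakConv u l → WeakConv (fun k => F (u k)) (F l)

/-- Superadditivity of `liminf` in `ℝ≥0∞`. -/
lemma ennreal_liminf_add_le (f g : ℕ → ℝ≥0∞) :
    liminf f atTop + liminf g atTop ≤ liminf (fun k => f k + g k) atTop := by
  rw [liminf_eq_iSup_iInf_of_nat, liminf_eq_iSup_iInf_of_nat, liminf_eq_iSup_iInf_of_nat]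
  have hf : Monotone (fun n : ℕ => ⨅ i ≥ n, f i) := fun n m hnm =>
    le_iInf₂ fun i hi => iInf₂_le i (hnm.trans hi)
  have hg : Monotone (fun n : ℕ => ⨅ i ≥ n, g i) := fun n m hnm =>
    le_iInf₂ fun i hi => iInf₂_le i (hnm.trans hi)
  rw [ENNReal.iSup_add_iSup_of_monotone hf hg]
  refine iSup_mono fun n => ?_
  exact le_iInf₂ fun i hi => add_le_add (iInf₂_le i hi) (iInf₂_le i hi)

/-- under the standing assumptions the regularizer
`R_c(u) = Σ_λ w_λ |(E u)_λ|^q + (c/2)‖u − D(E u)‖²` is weakly sequentially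
lower semicontinuous on `X`. -/
theorem anett_regularizer_weakly_lsc
    {X : Type*} [NormedAddCommGroup X] [InnerProductSpace ℝ X] [CompleteSpace X]
    {Λ : Type*} [Countable Λ]
    (E : X → lp (fun _ : Λ => ℝ) 2) (D : lp (fun _ : Λ => ℝ) 2 → X)
    (hE : WeakSeqCont E) (hD : WeakSeqCont D)
    (q : ℝ) (hq : 1 ≤ q) (c : ℝ) (hc : 0 < c)
    (w : Λ → ℝ) (wmin : ℝ) (hwmin : 0 < wmin) (hw : ∀ lam, wmin ≤ w lam)
    (Rc : X → ℝ≥0∞)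
    (hRc : ∀ u : X, Rc u =
      (∑' lam : Λ, ENNReal.ofReal (w lam * |E u lam| ^ q)) +
        ENNReal.ofReal (c / 2 * ‖u - D (E u)‖ ^ 2)) :
    ∀ (u : ℕ → X) (l : X), WeakConv u l →
      Rc l ≤ liminf (fun k => Rc (u k)) atTop := by
  intro u l hu
  classical
  -- coordinatewise convergence of E (u k)
  have hEconv : WeakConv (fun k => E (u k)) (E l) := hE u l hu
  have hcoord : ∀ lam : Λ, Tendsto (fun k => (E (u k) : ∀ _ : Λ, ℝ) lam) atTop
      (nhds ((E l : ∀ _ : Λ, ℝ) lam)) := by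
    intro lam
    have h := hEconv (lp.single 2 lam (1 : ℝ))
    simpa [lp.inner_single_left, real_inner_comm, RCLike.inner_apply] using h
  -- Fatou-type lower semicontinuity of the tsum part
  have hA : (∑' lam : Λ, ENNReal.ofReal (w lam * |E l lam| ^ q)) ≤
      liminf (fun k => ∑' lam : Λ, ENNReal.ofReal (w lam * |E (u k) lam| ^ q)) atTop := by
    have hptwise : ∀ lam : Λ, Tendsto (fun k => ENNReal.ofReal (w lam * |E (u k) lam| ^ q))
        atTop (nhds (ENNReal.ofReal (w lam * |E l lam| ^ q))) := by
      intro lam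
      refine (ENNReal.continuous_ofReal.tendsto _).comp ?_
      refine (tendsto_const_nhds.mul ?_)
      have habs : Tendsto (fun k => |E (u k) lam|) atTop (nhds (|E l lam|)) :=
        (continuous_abs.tendsto _).comp (hcoord lam)
      exact (Real.continuousAt_rpow_const _ _ (Or.inr (by linarith))).tendsto.comp habs
    rw [ENNReal.tsum_eq_iSup_sum]
    refine iSup_le fun s => ?_
    have hsum : Tendsto (fun k => ∑ lam ∈ s, ENNReal.ofReal (w lam * |E (u k) lam| ^ q))
        atTop (nhds (∑ lam ∈ s, ENNReal.ofReal (w lam * |E l lam| ^ q))) :=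
      tendsto_finset_sum s fun lam _ => hptwise lam
    calc (∑ lam ∈ s, ENNReal.ofReal (w lam * |E l lam| ^ q))
        = liminf (fun k => ∑ lam ∈ s, ENNReal.ofReal (w lam * |E (u k) lam| ^ q)) atTop :=
          hsum.liminf_eq.symm
      _ ≤ liminf (fun k => ∑' lam : Λ, ENNReal.ofReal (w lam * |E (u k) lam| ^ q)) atTop := by
          refine liminf_le_liminf (Eventually.of_forall fun k => ?_)
          exact ENNReal.sum_le_tsum s
  -- weak convergence of v k := u k - D (E (u k)) to v := l - D (E l)
  set v : X := l - D (E l) with hv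
  set vk : ℕ → X := fun k => u k - D (E (u k)) with hvk
  have hDconv : WeakConv (fun k => D (E (u k))) (D (E l)) := hD (fun k => E (u k)) (E l) hEconv
  have hvconv : WeakConv vk v := by
    intro x
    have h1 := hu x
    have h2 := hDconv x
    simpa [hvk, hv, inner_sub_right] using h1.sub h2
  -- lower semicontinuity of the norm under weak convergence (in ℝ≥0∞)
  have hnorm : ENNReal.ofReal ‖v‖ ≤ liminf (fun k => ENNReal.ofReal ‖vk k‖) atTop := by
    rcases eq_or_ne v 0 with h0 | h0
    · simp [h0]
    · set a : ℝ≥0∞ := ENNReal.ofReal ‖v‖ with ha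
      have ha0 : a ≠ 0 := by
        simp [ha, ENNReal.ofReal_eq_zero, not_le, norm_pos_iff, h0]
      have hatop : a ≠ ∞ := ENNReal.ofReal_ne_top
      have ht : Tendsto (fun k => ENNReal.ofReal ⟪v, vk k⟫) atTop (nhds (a * a)) := by
        have := hvconv v
        have : Tendsto (fun k => ENNReal.ofReal ⟪v, vk k⟫) atTop
            (nhds (ENNReal.ofReal ⟪v, v⟫)) := (ENNReal.continuous_ofReal.tendsto _).comp this
        convert this using 2
        rw [real_inner_self_eq_norm_mul_norm, ha, ← ENNReal.ofReal_mul (norm_nonneg v)]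
      have hle : ∀ k, ENNReal.ofReal ⟪v, vk k⟫ ≤ a * ENNReal.ofReal ‖vk k‖ := by
        intro k
        calc ENNReal.ofReal ⟪v, vk k⟫ ≤ ENNReal.ofReal (‖v‖ * ‖vk k‖) :=
              ENNReal.ofReal_le_ofReal (real_inner_le_norm v (vk k))
          _ = a * ENNReal.ofReal ‖vk k‖ := ENNReal.ofReal_mul (norm_nonneg v)
      have key : a * a ≤ a * liminf (fun k => ENNReal.ofReal ‖vk k‖) atTop := by
        have h1 : a * a = liminf (fun k => ENNReal.ofReal ⟪v, vk k⟫) atTop := ht.liminf_eq.symm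
        have h2 : liminf (fun k => ENNReal.ofReal ⟪v, vk k⟫) atTop ≤
            liminf (fun k => a * ENNReal.ofReal ‖vk k‖) atTop :=
          liminf_le_liminf (Eventually.of_forall hle)
        have hmono : Monotone (fun x : ℝ≥0∞ => a * x) := fun x y hxy => mul_le_mul_right hxy a
        have hcont : ContinuousAt (fun x : ℝ≥0∞ => a * x)
            (liminf (fun k => ENNReal.ofReal ‖vk k‖) atTop) :=
          (ENNReal.continuous_const_mul hatop).continuousAt
        have h3 := hmono.map_liminf_of_continuousAt
          (F := atTop) (fun k => ENNReal.ofReal ‖vk k‖) hcont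
        rw [h1]
        exact h2.trans (le_of_eq h3.symm)
      exact (ENNReal.mul_le_mul_iff_right ha0 hatop).mp key
  -- transfer to the quadratic term
  have hB : ENNReal.ofReal (c / 2 * ‖v‖ ^ 2) ≤
      liminf (fun k => ENNReal.ofReal (c / 2 * ‖vk k‖ ^ 2)) atTop := by
    have hrw : ∀ x : X, ENNReal.ofReal (c / 2 * ‖x‖ ^ 2) =
        ENNReal.ofReal (c / 2) * (ENNReal.ofReal ‖x‖) ^ 2 := by
      intro x
      rw [ENNReal.ofReal_mul (by positivity), ENNReal.ofReal_pow (norm_nonneg x)]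
    have hmono : Monotone (fun x : ℝ≥0∞ => ENNReal.ofReal (c / 2) * x ^ 2) := by
      intro x y hxy
      exact mul_le_mul_right (pow_le_pow_left' hxy 2) _
    have hcont : ContinuousAt (fun x : ℝ≥0∞ => ENNReal.ofReal (c / 2) * x ^ 2)
        (liminf (fun k => ENNReal.ofReal ‖vk k‖) atTop) := by
      exact ((ENNReal.continuous_const_mul ENNReal.ofReal_ne_top).comp
        (ENNReal.continuous_pow 2)).continuousAt
    have h3 := hmono.map_liminf_of_continuousAt (F := atTop)
      (fun k => ENNReal.ofReal ‖vk k‖) hcont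
    calc ENNReal.ofReal (c / 2 * ‖v‖ ^ 2)
        = ENNReal.ofReal (c / 2) * (ENNReal.ofReal ‖v‖) ^ 2 := hrw v
      _ ≤ ENNReal.ofReal (c / 2) * (liminf (fun k => ENNReal.ofReal ‖vk k‖) atTop) ^ 2 :=
          mul_le_mul_right (pow_le_pow_left' hnorm 2) _
      _ = liminf (fun k => ENNReal.ofReal (c / 2) * (ENNReal.ofReal ‖vk k‖) ^ 2) atTop := h3
      _ = liminf (fun k => ENNReal.ofReal (c / 2 * ‖vk k‖ ^ 2)) atTop := by
          simp only [hrw]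
  -- combine
  rw [hRc l]
  have hsplit : (liminf (fun k => ∑' lam : Λ, ENNReal.ofReal (w lam * |E (u k) lam| ^ q)) atTop)
      + liminf (fun k => ENNReal.ofReal (c / 2 * ‖vk k‖ ^ 2)) atTop ≤
      liminf (fun k => Rc (u k)) atTop := by
    have := ennreal_liminf_add_le
      (fun k => ∑' lam : Λ, ENNReal.ofReal (w lam * |E (u k) lam| ^ q))
      (fun k => ENNReal.ofReal (c / 2 * ‖vk k‖ ^ 2))
    refine this.trans_eq ?_
    congr 1
    funext k
    rw [hRc (u k)]
  exact le_trans (add_le_add hA hB) hsplit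
end

section
/- (Stability/convergence of aNETT) Let y ∈ ran(K), let y_k ∈ Y with ‖y_k − y‖ ≤ δ_k, and let δ_k → 0, α_k → 0 and δ_k²/α_k → 0. If u_k minimizes T_{α_k, y_k}, then (u_k) has a weak accumulation point, every weak accumulation point u* of (u_k) satisfies K u* = y and R_c(u*) = min{R_c(v) : K v = y}, i.e. u* is an R_c-minimizing solution. -/
open scoped ENNReal
open RealInnerProductSpace Filter Topology

theorem exists_weak_subseq {X : Type*} [NormedAddCommGroup X] [InnerProductSpace ℝ X]
    [CompleteSpace X] (u : ℕ → X) (M : ℝ) (hM : ∀ k, ‖u k‖ ≤ M) :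
    ∃ (ustar : X) (φ : ℕ → ℕ), StrictMono φ ∧ WeakConv (u ∘ φ) ustar := by
  have hM0 : 0 ≤ M := le_trans (norm_nonneg _) (hM 0)
  set H : Submodule ℝ X := (Submodule.span ℝ (Set.range u)).topologicalClosure with hH
  have huH : ∀ k, u k ∈ H :=
    fun k => Submodule.le_topologicalClosure _ (Submodule.subset_span (Set.mem_range_self k))
  have hsep : TopologicalSpace.IsSeparable (H : Set X) :=
    (Set.countable_range u).isSeparable.span.closure
  obtain ⟨c, hc_count, hc_sub⟩ := hsep
  obtain ⟨d, hd⟩ : ∃ d : ℕ → X, insert (0 : X) c = Set.range d :=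
    (hc_count.insert 0).exists_eq_range (Set.insert_nonempty _ _)
  have hHd : (H : Set X) ⊆ closure (Set.range d) := by
    refine hc_sub.trans (closure_mono ?_)
    rw [← hd]; exact Set.subset_insert _ _
  -- the pointwise-evaluation sequence
  set f : ℕ → ℕ → ℝ := fun k i => ⟪d i, u k⟫ with hf
  have hfS : ∀ k, f k ∈ Set.pi Set.univ (fun i => Set.Icc (-(‖d i‖ * M)) (‖d i‖ * M)) := by
    intro k i _
    rw [Set.mem_Icc, ← abs_le]
    exact (abs_real_inner_le_norm _ _).trans
      (mul_le_mul_of_nonneg_left (hM k) (norm_nonneg _))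
  have hScompact : IsCompact (Set.pi Set.univ (fun i => Set.Icc (-(‖d i‖ * M)) (‖d i‖ * M))) :=
    isCompact_univ_pi (fun i => isCompact_Icc)
  obtain ⟨g, -, φ, hφ, hconv⟩ := hScompact.tendsto_subseq hfS
  have hconv' : ∀ i, Tendsto (fun k => ⟪d i, u (φ k)⟫) atTop (nhds (g i)) := by
    rw [tendsto_pi_nhds] at hconv
    exact fun i => hconv i
  -- Cauchy for every v
  have hcauchy : ∀ v : X, CauchySeq (fun k => ⟪v, u (φ k)⟫) := by
    intro v
    obtain ⟨p, hp, z, hz, rfl⟩ := H.exists_add_mem_mem_orthogonal v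
    have hzu : ∀ k, ⟪z, u k⟫ = 0 := fun k => by
      rw [real_inner_comm]; exact (Submodule.mem_orthogonal H z).mp hz (u k) (huH k)
    have : (fun k => ⟪p + z, u (φ k)⟫) = fun k => ⟪p, u (φ k)⟫ := by
      funext k; rw [inner_add_left, hzu (φ k), add_zero]
    rw [this]
    rw [Metric.cauchySeq_iff]
    intro ε hε
    obtain ⟨w, hw_mem, hw_close⟩ : ∃ w ∈ Set.range d, ‖p - w‖ < ε / (3 * (M + 1)) := by
      have := Metric.mem_closure_iff.mp (hHd hp) (ε / (3 * (M + 1)))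
        (by positivity)
      obtain ⟨w, hw1, hw2⟩ := this
      exact ⟨w, hw1, by rwa [dist_eq_norm] at hw2⟩
    obtain ⟨i, rfl⟩ := hw_mem
    have hcd : CauchySeq (fun k => ⟪d i, u (φ k)⟫) := (hconv' i).cauchySeq
    obtain ⟨N, hN⟩ := Metric.cauchySeq_iff.mp hcd (ε / 3) (by positivity)
    refine ⟨N, fun m hm n hn => ?_⟩
    have key : ∀ k, |⟪p, u (φ k)⟫ - ⟪d i, u (φ k)⟫| ≤ ε / (3 * (M + 1)) * M := by
      intro k
      rw [← inner_sub_left]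
      exact (abs_real_inner_le_norm _ _).trans
        (mul_le_mul (le_of_lt hw_close) (hM _) (norm_nonneg _) (by positivity))
    have hsmall : ε / (3 * (M + 1)) * M < ε / 3 := by
      rw [div_mul_eq_mul_div, div_lt_div_iff₀ (by positivity) (by positivity)]
      nlinarith
    have h1 := key m
    have h2 := key n
    have h3 := hN m hm n hn
    rw [Real.dist_eq] at h3 ⊢
    calc |⟪p, u (φ m)⟫ - ⟪p, u (φ n)⟫|
        ≤ |⟪p, u (φ m)⟫ - ⟪d i, u (φ m)⟫| + |⟪d i, u (φ m)⟫ - ⟪d i, u (φ n)⟫|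
          + |⟪d i, u (φ n)⟫ - ⟪p, u (φ n)⟫| := by
          have := abs_sub_le (⟪p, u (φ m)⟫) (⟪d i, u (φ m)⟫) (⟪p, u (φ n)⟫)
          have := abs_sub_le (⟪d i, u (φ m)⟫) (⟪d i, u (φ n)⟫) (⟪p, u (φ n)⟫)
          linarith [abs_sub_le (⟪p, u (φ m)⟫) (⟪d i, u (φ m)⟫) (⟪p, u (φ n)⟫),
            abs_sub_le (⟪d i, u (φ m)⟫) (⟪d i, u (φ n)⟫) (⟪p, u (φ n)⟫)]
      _ < ε / 3 + ε / 3 + ε / 3 := by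
          rw [abs_sub_comm (⟪d i, u (φ n)⟫)]
          have := hsmall
          linarith
      _ = ε := by ring
  -- limits define a bounded linear functional
  choose L hL using fun v => cauchySeq_tendsto_of_complete (hcauchy v)
  have hLadd : ∀ v w : X, L (v + w) = L v + L w := by
    intro v w
    refine tendsto_nhds_unique (hL (v + w)) ?_
    have : (fun k => ⟪v + w, u (φ k)⟫) = fun k => ⟪v, u (φ k)⟫ + ⟪w, u (φ k)⟫ := by
      funext k; rw [inner_add_left]
    rw [this]
    exact (hL v).add (hL w)
  have hLsmul : ∀ (a : ℝ) (v : X), L (a • v) = a * L v := by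
    intro a v
    refine tendsto_nhds_unique (hL (a • v)) ?_
    have : (fun k => ⟪a • v, u (φ k)⟫) = fun k => a * ⟪v, u (φ k)⟫ := by
      funext k; rw [real_inner_smul_left]
    rw [this]
    exact (hL v).const_mul a
  have hLbound : ∀ v : X, |L v| ≤ M * ‖v‖ := by
    intro v
    have : Tendsto (fun k => |⟪v, u (φ k)⟫|) atTop (nhds |L v|) := (hL v).abs
    refine le_of_tendsto this (Filter.Eventually.of_forall fun k => ?_)
    calc |⟪v, u (φ k)⟫| ≤ ‖v‖ * ‖u (φ k)‖ := abs_real_inner_le_norm _ _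
      _ ≤ ‖v‖ * M := mul_le_mul_of_nonneg_left (hM _) (norm_nonneg _)
      _ = M * ‖v‖ := mul_comm _ _
  let ℓ : X →ₗ[ℝ] ℝ := { toFun := L, map_add' := hLadd, map_smul' := hLsmul }
  let ℓc : X →L[ℝ] ℝ := ℓ.mkContinuous M (fun v => by
    rw [Real.norm_eq_abs]; exact hLbound v)
  refine ⟨(InnerProductSpace.toDual ℝ X).symm ℓc, φ, hφ, fun v => ?_⟩
  have : ⟪v, (InnerProductSpace.toDual ℝ X).symm ℓc⟫ = L v := by
    rw [real_inner_comm, InnerProductSpace.toDual_symm_apply]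
    rfl
  rw [this]
  exact hL v


/-- stability / convergence of aNETT: with `y ∈ ran K`,
`‖y_k − y‖ ≤ δ_k`, `δ_k → 0`, `α_k → 0`, `δ_k²/α_k → 0`, and `u_k`
minimizers of `T_{α_k, y_k}`, the sequence `(u_k)` has a weak accumulation
point, and every weak accumulation point is an `R`-minimizing solution of
`K u = y`. -/
theorem anett_stability_convergence
    {X Y : Type*} [NormedAddCommGroup X] [InnerProductSpace ℝ X] [CompleteSpace X]
    [NormedAddCommGroup Y] [InnerProductSpace ℝ Y] [CompleteSpace Y]
    (K : X →L[ℝ] Y) (R : X → ℝ≥0∞)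
    (hcoercive : ∀ u : ℕ → X, Tendsto (fun k => ‖u k‖) atTop atTop →
      Tendsto (fun k => R (u k)) atTop (nhds ⊤))
    (hlsc : ∀ (u : ℕ → X) (l : X), WeakConv u l →
      R l ≤ liminf (fun k => R (u k)) atTop)
    (T : ℝ → Y → X → ℝ≥0∞)
    (hT : ∀ (α : ℝ) (y' : Y) (u : X),
      T α y' u = ENNReal.ofReal (‖K u - y'‖ ^ 2) + ENNReal.ofReal α * R u)
    (y : Y) (hy : ∃ v : X, K v = y)
    (hRy : ∃ v : X, K v = y ∧ R v ≠ ⊤)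
    (yk : ℕ → Y) (δ : ℕ → ℝ) (α : ℕ → ℝ)
    (hα : ∀ k, 0 < α k) (hδ : ∀ k, 0 ≤ δ k)
    (hyk : ∀ k, ‖yk k - y‖ ≤ δ k)
    (hδ0 : Tendsto δ atTop (nhds 0))
    (hα0 : Tendsto α atTop (nhds 0))
    (hδα : Tendsto (fun k => δ k ^ 2 / α k) atTop (nhds 0))
    (u : ℕ → X) (hu : ∀ k, ∀ v : X, T (α k) (yk k) (u k) ≤ T (α k) (yk k) v) :
    (∃ (ustar : X) (φ : ℕ → ℕ), StrictMono φ ∧ WeakConv (u ∘ φ) ustar) ∧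
      ∀ (ustar : X) (φ : ℕ → ℕ), StrictMono φ → WeakConv (u ∘ φ) ustar →
        K ustar = y ∧ ∀ v : X, K v = y → R ustar ≤ R v := by
  obtain ⟨v₀, hv₀, hRv₀⟩ := hRy
  -- the key estimate from minimality
  have key : ∀ (v : X), K v = y → ∀ k, T (α k) (yk k) (u k) ≤
      ENNReal.ofReal (δ k ^ 2) + ENNReal.ofReal (α k) * R v := by
    intro v hv k
    refine (hu k v).trans ?_
    rw [hT]
    gcongr
    have h1 : ‖K v - yk k‖ ≤ δ k := by
      rw [hv, norm_sub_rev]; exact hyk k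
    exact h1
  -- dividing by α k
  have hRbound : ∀ (v : X), K v = y → ∀ k,
      R (u k) ≤ ENNReal.ofReal (δ k ^ 2 / α k) + R v := by
    intro v hv k
    have h := (le_trans (by rw [hT]; exact le_add_self) (key v hv k) :
      ENNReal.ofReal (α k) * R (u k) ≤ ENNReal.ofReal (δ k ^ 2) + ENNReal.ofReal (α k) * R v)
    have ha0 : ENNReal.ofReal (α k) ≠ 0 := by
      simp [ENNReal.ofReal_eq_zero, not_le, hα k]
    have haT : ENNReal.ofReal (α k) ≠ ⊤ := ENNReal.ofReal_ne_top
    rw [← ENNReal.mul_le_mul_iff_right ha0 haT, mul_add, ← ENNReal.ofReal_mul (le_of_lt (hα k))]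
    rw [mul_div_assoc', mul_div_cancel_left₀ _ (ne_of_gt (hα k))]
    exact h
  -- δ²/α is bounded; uniform bound on R (u k)
  obtain ⟨C, hC⟩ : ∃ C, ∀ k, δ k ^ 2 / α k ≤ C := by
    obtain ⟨C, hC⟩ := hδα.bddAbove_range
    exact ⟨C, fun k => hC (Set.mem_range_self k)⟩
  have hRunif : ∀ k, R (u k) ≤ ENNReal.ofReal C + R v₀ := fun k =>
    (hRbound v₀ hv₀ k).trans (by gcongr; exact hC k)
  have hBtop : ENNReal.ofReal C + R v₀ < ⊤ := by
    rw [ENNReal.add_lt_top]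
    exact ⟨ENNReal.ofReal_lt_top, lt_top_iff_ne_top.mpr hRv₀⟩
  -- boundedness of the sequence
  obtain ⟨M, hM⟩ : ∃ M, ∀ k, ‖u k‖ ≤ M := by
    by_contra h
    push_neg at h
    choose ψ hψ using fun n : ℕ => h n
    have hnorm : Tendsto (fun n => ‖u (ψ n)‖) atTop atTop :=
      tendsto_atTop_mono (fun n => le_of_lt (hψ n)) tendsto_natCast_atTop_atTop
    have htop := hcoercive (u ∘ ψ) hnorm
    have hev := (htop.eventually_mem (Ioi_mem_nhds hBtop)).exists
    obtain ⟨n, hn⟩ := hev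
    exact absurd (hRunif (ψ n)) (not_le.mpr hn)
  -- strong convergence K (u k) → y
  have hRv₀real : ∀ k, ‖K (u k) - yk k‖ ^ 2 ≤ δ k ^ 2 + α k * (R v₀).toReal := by
    intro k
    have h := (le_trans (by rw [hT]; exact le_self_add) (key v₀ hv₀ k) :
      ENNReal.ofReal (‖K (u k) - yk k‖ ^ 2) ≤
        ENNReal.ofReal (δ k ^ 2) + ENNReal.ofReal (α k) * R v₀)
    have hne : ENNReal.ofReal (δ k ^ 2) + ENNReal.ofReal (α k) * R v₀ ≠ ⊤ :=
      ENNReal.add_ne_top.mpr ⟨ENNReal.ofReal_ne_top,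
        ENNReal.mul_ne_top ENNReal.ofReal_ne_top hRv₀⟩
    have h' := (ENNReal.toReal_le_toReal ENNReal.ofReal_ne_top hne).mpr h
    rwa [ENNReal.toReal_add ENNReal.ofReal_ne_top
        (ENNReal.mul_ne_top ENNReal.ofReal_ne_top hRv₀), ENNReal.toReal_mul,
      ENNReal.toReal_ofReal (by positivity), ENNReal.toReal_ofReal (by positivity),
      ENNReal.toReal_ofReal (hα k).le] at h'
  have hKstrong : Tendsto (fun k => K (u k)) atTop (nhds y) := by
    rw [tendsto_iff_norm_sub_tendsto_zero]
    have h1 : Tendsto (fun k => Real.sqrt (δ k ^ 2 + α k * (R v₀).toReal)) atTop (nhds 0) := by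
      have : Tendsto (fun k => δ k ^ 2 + α k * (R v₀).toReal) atTop (nhds 0) := by
        have h2 : Tendsto (fun k => δ k ^ 2) atTop (nhds 0) := by
          simpa using hδ0.pow 2
        have h3 : Tendsto (fun k => α k * (R v₀).toReal) atTop (nhds 0) := by
          simpa using hα0.mul_const (R v₀).toReal
        simpa using h2.add h3
      simpa [Real.sqrt_zero] using this.sqrt
    have h2 : Tendsto (fun k => ‖K (u k) - yk k‖) atTop (nhds 0) := by
      refine squeeze_zero (fun k => norm_nonneg _) (fun k => ?_) h1
      exact Real.le_sqrt_of_sq_le (hRv₀real k)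
    refine squeeze_zero (fun k => norm_nonneg _) (fun k => ?_) (by simpa using h2.add hδ0)
    calc ‖K (u k) - y‖ ≤ ‖K (u k) - yk k‖ + ‖yk k - y‖ := by
          have := norm_sub_le_norm_sub_add_norm_sub (K (u k)) (yk k) y
          linarith [norm_sub_le (K (u k) - yk k) (y - yk k)]
      _ ≤ ‖K (u k) - yk k‖ + δ k := by linarith [hyk k]
  -- weak convergence of K (u k)
  have hKweak : ∀ w : Y, Tendsto (fun k => ⟪w, K (u k)⟫) atTop (nhds ⟪w, y⟫) := by
    intro w
    exact ((continuous_const.inner continuous_id).tendsto y).comp hKstrong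
  constructor
  · exact exists_weak_subseq u M hM
  · intro ustar φ hφ hw
    have hKy : K ustar = y := by
      have h1 : ∀ w : Y, ⟪w, K ustar⟫ = ⟪w, y⟫ := by
        intro w
        have ha := hw ((ContinuousLinearMap.adjoint K) w)
        have hb : ∀ x : X, ⟪(ContinuousLinearMap.adjoint K) w, x⟫ = ⟪w, K x⟫ := fun x =>
          ContinuousLinearMap.adjoint_inner_left K x w
        have ha' : Tendsto (fun k => ⟪w, K (u (φ k))⟫) atTop (nhds ⟪w, K ustar⟫) := by
          simpa [hb, Function.comp] using ha
        have hc : Tendsto (fun k => ⟪w, K (u (φ k))⟫) atTop (nhds ⟪w, y⟫) :=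
          (hKweak w).comp hφ.tendsto_atTop
        exact tendsto_nhds_unique ha' hc
      have h2 := h1 (K ustar - y)
      rw [← sub_eq_zero, ← inner_sub_right] at h2
      rwa [inner_self_eq_zero, sub_eq_zero] at h2
    refine ⟨hKy, fun v hv => ?_⟩
    by_cases hvtop : R v = ⊤
    · rw [hvtop]; exact le_top
    have h1 : R ustar ≤ liminf (fun k => R (u (φ k))) atTop := hlsc (u ∘ φ) ustar hw
    refine h1.trans ?_
    have h2 : Tendsto (fun k => ENNReal.ofReal (δ (φ k) ^ 2 / α (φ k)) + R v) atTop
        (nhds (0 + R v)) := by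
      refine Tendsto.add ?_ tendsto_const_nhds
      have : Tendsto (fun k => δ (φ k) ^ 2 / α (φ k)) atTop (nhds 0) :=
        hδα.comp hφ.tendsto_atTop
      simpa [Function.comp_def] using (ENNReal.continuous_ofReal.tendsto 0).comp this
    rw [zero_add] at h2
    calc liminf (fun k => R (u (φ k))) atTop
        ≤ liminf (fun k => ENNReal.ofReal (δ (φ k) ^ 2 / α (φ k)) + R v) atTop :=
          liminf_le_liminf (Eventually.of_forall fun k => hRbound v hv (φ k))
      _ = R v := h2.liminf_eq
end
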